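/- Let H be a k-uniform hypergraph with finitely many edges, k ≥ 1, i.e., every edge is a set of exactly k vertices. If every edge of H intersects at most 2^{k−1}/e − 1 other edges (where e is Euler's number), then there is a 2-coloring of the vertices of H in which no edge is monochromatic. -/

import Mathlib

open Finset

def LLLMono {V : Type*} [DecidableEq V] (f c : Finset V) : Prop := c ∩ f = f ∨ c ∩ f = ∅

instance {V : Type*} [DecidableEq V] (f c : Finset V) : Decidable (LLLMono f c) := by
  unfold LLLMono; infer_instance

lemma LLL_card_prod {V : Type*} [DecidableEq V] (u v : Finset V) (huv : Disjoint u v)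
    (p q : Finset V → Prop) [DecidablePred p] [DecidablePred q] :
    ((u ∪ v).powerset.filter (fun c => p (c ∩ u) ∧ q (c ∩ v))).card
      = (u.powerset.filter p).card * (v.powerset.filter q).card := by
  rw [← Finset.card_product]
  apply Finset.card_nbij' (fun c => (c ∩ u, c ∩ v)) (fun ab => ab.1 ∪ ab.2)
  · intro c hc
    simp only [mem_coe, mem_filter, mem_powerset] at hc
    simp only [mem_coe, mem_product, mem_filter, mem_powerset]
    exact ⟨⟨inter_subset_right, hc.2.1⟩, ⟨inter_subset_right, hc.2.2⟩⟩
  · rintro ⟨a, b⟩ hab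
    simp only [mem_coe, mem_product, mem_filter, mem_powerset] at hab
    obtain ⟨⟨hau, hpa⟩, ⟨hbv, hqb⟩⟩ := hab
    have h1 : (a ∪ b) ∩ u = a := by
      rw [union_inter_distrib_right, inter_eq_left.mpr hau,
        disjoint_iff_inter_eq_empty.mp (huv.symm.mono_left hbv), union_empty]
    have h2 : (a ∪ b) ∩ v = b := by
      rw [union_inter_distrib_right, inter_eq_left.mpr hbv,
        disjoint_iff_inter_eq_empty.mp (huv.mono_left hau), empty_union]
    simp only [mem_coe, mem_filter, mem_powerset, h1, h2]
    exact ⟨union_subset_union hau hbv, hpa, hqb⟩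
  · intro c hc
    simp only [mem_coe, mem_filter, mem_powerset] at hc
    dsimp only
    rw [← inter_union_distrib_left, inter_eq_left.mpr hc.1]
  · rintro ⟨a, b⟩ hab
    simp only [mem_coe, mem_product, mem_filter, mem_powerset] at hab
    obtain ⟨⟨hau, hpa⟩, ⟨hbv, hqb⟩⟩ := hab
    have h1 : (a ∪ b) ∩ u = a := by
      rw [union_inter_distrib_right, inter_eq_left.mpr hau,
        disjoint_iff_inter_eq_empty.mp (huv.symm.mono_left hbv), union_empty]
    have h2 : (a ∪ b) ∩ v = b := by
      rw [union_inter_distrib_right, inter_eq_left.mpr hbv,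
        disjoint_iff_inter_eq_empty.mp (huv.mono_left hau), empty_union]
    simp [h1, h2]

lemma LLL_card_mono {V : Type*} [DecidableEq V] (e : Finset V) (he : e.Nonempty) :
    (e.powerset.filter (fun a => LLLMono e a)).card = 2 := by
  have : e.powerset.filter (fun a => LLLMono e a) = {e, ∅} := by
    ext a
    simp only [mem_filter, mem_powerset, mem_insert, mem_singleton]
    simp only [LLLMono]
    constructor
    · rintro ⟨hae, h | h⟩
      · left; rw [inter_eq_left.mpr hae] at h; exact h
      · right; rwa [inter_eq_left.mpr hae] at h
    · rintro (rfl | rfl)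
      · exact ⟨subset_rfl, Or.inl (inter_self _)⟩
      · exact ⟨empty_subset _, Or.inr (empty_inter _)⟩
  rw [this]
  have hne : e ∉ ({∅} : Finset (Finset V)) := by simp [he.ne_empty]
  rw [card_insert_of_notMem hne, card_singleton]

lemma LLLMono_inter {V : Type*} [DecidableEq V] (f c u : Finset V) (hfu : f ⊆ u) :
    LLLMono f (c ∩ u) ↔ LLLMono f c := by
  unfold LLLMono
  rw [inter_assoc, inter_eq_right.mpr hfu]

lemma LLL_partition {V : Type*} [DecidableEq V] (W e : Finset V) (S : Finset (Finset V)) :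
    (W.powerset.filter (fun c => ∀ f ∈ S, ¬LLLMono f c)).card
      = (W.powerset.filter (fun c => ∀ f ∈ insert e S, ¬LLLMono f c)).card
        + (W.powerset.filter (fun c => (∀ f ∈ S, ¬LLLMono f c) ∧ LLLMono e c)).card := by
  have h := Finset.card_filter_add_card_filter_not
    (s := W.powerset.filter (fun c => ∀ f ∈ S, ¬LLLMono f c)) (p := fun c => LLLMono e c)
  rw [Finset.filter_filter, Finset.filter_filter] at h
  rw [← h, Nat.add_comm]
  congr 1
  refine congrArg Finset.card (Finset.filter_congr ?_)
  intro c _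
  simp only [Finset.forall_mem_insert]
  tauto

lemma LLL_indep {V : Type*} [DecidableEq V] (k : ℕ) (hk : 1 ≤ k) (W e : Finset V)
    (heW : e ⊆ W) (hek : e.card = k) (S2 : Finset (Finset V))
    (hS2 : ∀ f ∈ S2, f ⊆ W ∧ e ∩ f = ∅) :
    (W.powerset.filter (fun c => (∀ f ∈ S2, ¬LLLMono f c) ∧ LLLMono e c)).card * 2 ^ (k - 1)
      = (W.powerset.filter (fun c => ∀ f ∈ S2, ¬LLLMono f c)).card := by
  have he : e.Nonempty := Finset.card_pos.mp (by omega)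
  have hW : e ∪ W \ e = W := Finset.union_sdiff_of_subset heW
  have hdisj : Disjoint e (W \ e) := Finset.disjoint_sdiff
  have hfsub : ∀ f ∈ S2, f ⊆ W \ e := by
    intro f hf
    rw [Finset.subset_sdiff]
    exact ⟨(hS2 f hf).1, Finset.disjoint_left.mpr (fun a haf hae =>
      (Finset.eq_empty_iff_forall_notMem.mp (hS2 f hf).2 a) (Finset.mem_inter.mpr ⟨hae, haf⟩))⟩
  have key1 : (W.powerset.filter (fun c => (∀ f ∈ S2, ¬LLLMono f c) ∧ LLLMono e c)).card
      = 2 * ((W \ e).powerset.filter (fun b => ∀ f ∈ S2, ¬LLLMono f b)).card := by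
    rw [← LLL_card_mono e he]
    rw [← LLL_card_prod e (W \ e) hdisj (fun a => LLLMono e a) (fun b => ∀ f ∈ S2, ¬LLLMono f b)]
    rw [hW]
    congr 1
    apply Finset.filter_congr
    intro c hc
    rw [LLLMono_inter e c e subset_rfl]
    constructor
    · rintro ⟨h1, h2⟩
      refine ⟨h2, fun f hf hm => h1 f hf ?_⟩
      rwa [LLLMono_inter f c (W \ e) (hfsub f hf)] at hm
    · rintro ⟨h2, h1⟩
      refine ⟨fun f hf hm => h1 f hf ?_, h2⟩
      rwa [LLLMono_inter f c (W \ e) (hfsub f hf)]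
  have key2 : (W.powerset.filter (fun c => ∀ f ∈ S2, ¬LLLMono f c)).card
      = 2 ^ k * ((W \ e).powerset.filter (fun b => ∀ f ∈ S2, ¬LLLMono f b)).card := by
    have h2k : (e.powerset.filter (fun _ => True)).card = 2 ^ k := by
      simp [Finset.card_powerset, hek]
    rw [← h2k]
    rw [← LLL_card_prod e (W \ e) hdisj (fun _ => True) (fun b => ∀ f ∈ S2, ¬LLLMono f b)]
    rw [hW]
    refine congrArg Finset.card (Finset.filter_congr ?_)
    intro c hc
    simp only [true_and]
    constructor
    · intro h1
      intro f hf hm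
      exact h1 f hf ((LLLMono_inter f c (W \ e) (hfsub f hf)).mp hm)
    · intro h1 f hf hm
      exact h1 f hf ((LLLMono_inter f c (W \ e) (hfsub f hf)).mpr hm)
  have h2 : 2 * 2 ^ (k - 1) = 2 ^ k := by
    rw [← pow_succ']
    congr 1
    omega
  rw [key1, key2, mul_comm 2, mul_assoc, h2, mul_comm]

lemma LLL_exp_bound (d : ℕ) (x : ℝ) (hx0 : 0 ≤ x) (hxd : x * (d + 1) ≤ 1) :
    1 ≤ Real.exp 1 * (1 - x) ^ d := by
  rcases Nat.eq_zero_or_pos d with rfl | hd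
  · simpa using Real.one_le_exp (by norm_num : (0:ℝ) ≤ 1)
  · have hdpos : (0:ℝ) < d := by exact_mod_cast hd
    have hx1 : x ≤ 1 / (d + 1) := by
      rw [le_div_iff₀ (by positivity)]
      linarith
    have h1x : (d : ℝ) / (d + 1) ≤ 1 - x := by
      have : (1:ℝ) - 1/(d+1) = d / (d+1) := by field_simp; ring
      linarith [this]
    have h1xnn : (0:ℝ) ≤ (d:ℝ) / (d + 1) := by positivity
    have hpow : ((d:ℝ) / (d + 1)) ^ d ≤ (1 - x) ^ d :=
      pow_le_pow_left₀ h1xnn h1x d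
    have hupper : (((d:ℝ) + 1) / d) ^ d ≤ Real.exp 1 := by
      have h1 : ((d:ℝ) + 1) / d = 1 + 1/d := by field_simp
      have h2 : (1:ℝ) + 1/d ≤ Real.exp (1/d) := by
        have := Real.add_one_le_exp (1/(d:ℝ)); linarith
      calc (((d:ℝ) + 1) / d) ^ d ≤ (Real.exp (1/d)) ^ d := by
            rw [h1]; exact pow_le_pow_left₀ (by positivity) h2 d
        _ = Real.exp 1 := by
            rw [← Real.exp_nat_mul]
            congr 1
            field_simp
    have hprod : (((d:ℝ) + 1) / d) ^ d * ((d:ℝ) / (d + 1)) ^ d = 1 := by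
      rw [← mul_pow]
      rw [div_mul_div_comm]
      rw [mul_comm ((d:ℝ)+1) d]
      rw [div_self (by positivity)]
      exact one_pow d
    calc (1:ℝ) = (((d:ℝ) + 1) / d) ^ d * ((d:ℝ) / (d + 1)) ^ d := hprod.symm
      _ ≤ Real.exp 1 * ((d:ℝ) / (d + 1)) ^ d := by
          apply mul_le_mul_of_nonneg_right hupper (by positivity)
      _ ≤ Real.exp 1 * (1 - x) ^ d := by
          apply mul_le_mul_of_nonneg_left hpow (Real.exp_pos 1).le

def LLLN {V : Type*} [DecidableEq V] (W : Finset V) (S : Finset (Finset V)) : ℕ :=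
  (W.powerset.filter (fun c => ∀ f ∈ S, ¬LLLMono f c)).card

lemma LLLN_empty {V : Type*} [DecidableEq V] (W : Finset V) :
    LLLN W ∅ = 2 ^ W.card := by
  simp [LLLN, Finset.card_powerset]

lemma LLL_step {V : Type*} [DecidableEq V] (k : ℕ) (hk3 : 3 ≤ k) (H : Finset (Finset V))
    (huniform : ∀ e ∈ H, e.card = k)
    (hdeg : ∀ e ∈ H,
      ((H.filter (fun e' => e' ≠ e ∧ (e ∩ e').Nonempty)).card : ℝ)
        ≤ 2 ^ (k - 1) / Real.exp 1 - 1) :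
    ∀ n : ℕ, ∀ S ⊆ H, S.card = n → ∀ e ∈ H,
      (1 - Real.exp 1 / 2 ^ (k - 1)) * (LLLN (H.sup id) S : ℝ)
        ≤ (LLLN (H.sup id) (insert e S) : ℝ) := by
  set W := H.sup id with hWdef
  set x : ℝ := Real.exp 1 / 2 ^ (k - 1) with hxdef
  have hp : (0:ℝ) < 2 ^ (k - 1) := by positivity
  have hx0 : 0 < x := by positivity
  intro n
  induction n using Nat.strong_induction_on with
  | _ n IH =>
    intro S hSH hScard e heH
    by_cases heS : e ∈ S
    · rw [Finset.insert_eq_self.mpr heS]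
      have hN : (0:ℝ) ≤ (LLLN W S : ℝ) := Nat.cast_nonneg _
      nlinarith
    -- e ∉ S
    set S1 := S.filter (fun f => (e ∩ f).Nonempty) with hS1def
    set S2 := S.filter (fun f => ¬(e ∩ f).Nonempty) with hS2def
    set d := S1.card with hddef
    have heW : e ⊆ W := Finset.le_sup (f := id) heH
    have hS2H : ∀ f ∈ S2, f ⊆ W ∧ e ∩ f = ∅ := by
      intro f hf
      rw [hS2def, Finset.mem_filter] at hf
      exact ⟨Finset.le_sup (f := id) (hSH hf.1), Finset.not_nonempty_iff_eq_empty.mp hf.2⟩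
    have hd : (d : ℝ) + 1 ≤ 2 ^ (k - 1) / Real.exp 1 := by
      have hsub : S1 ⊆ H.filter (fun e' => e' ≠ e ∧ (e ∩ e').Nonempty) := by
        intro f hf
        rw [hS1def, Finset.mem_filter] at hf
        rw [Finset.mem_filter]
        exact ⟨hSH hf.1, fun hfe => heS (hfe ▸ hf.1), hf.2⟩
      have h1 := Finset.card_le_card hsub
      have h2 := hdeg e heH
      have h3 : (d:ℝ) ≤ ((H.filter (fun e' => e' ≠ e ∧ (e ∩ e').Nonempty)).card : ℝ) := by
        exact_mod_cast h1
      linarith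
    -- claim A : (1-x)^|T| * N S2 ≤ N (S2 ∪ T) for T ⊆ S1
    have claimA : ∀ T : Finset (Finset V), T ⊆ S1 →
        (1 - x) ^ T.card * (LLLN W S2 : ℝ) ≤ (LLLN W (S2 ∪ T) : ℝ) := by
      intro T
      induction T using Finset.induction_on with
      | empty => intro _; rw [Finset.union_empty]; simp
      | @insert f T hfT ihT =>
        intro hsub
        have hT : T ⊆ S1 := fun g hg => hsub (Finset.mem_insert_of_mem hg)
        have hfS1 : f ∈ S1 := hsub (Finset.mem_insert_self f T)
        have hfS : f ∈ S := (Finset.mem_filter.mp hfS1).1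
        have hfH : f ∈ H := hSH hfS
        have hS2S : S2 ⊆ S := Finset.filter_subset _ _
        have hS1S : S1 ⊆ S := Finset.filter_subset _ _
        have hunionS : S2 ∪ T ⊆ S := Finset.union_subset hS2S (hT.trans hS1S)
        have hfnotin : f ∉ S2 ∪ T := by
          rw [Finset.mem_union]
          rintro (h | h)
          · exact (Finset.mem_filter.mp h).2 (Finset.mem_filter.mp hfS1).2
          · exact hfT h
        have hss : S2 ∪ T ⊂ S := ⟨hunionS, fun hcon => hfnotin (hcon hfS)⟩
        have hcardlt : (S2 ∪ T).card < n := hScard ▸ Finset.card_lt_card hss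
        have hstep := IH (S2 ∪ T).card hcardlt (S2 ∪ T) (hunionS.trans hSH) rfl f hfH
        rw [← Finset.union_insert] at hstep
        have h1 : (1 - x) ^ T.card * (LLLN W S2 : ℝ) ≤ (LLLN W (S2 ∪ T) : ℝ) := ihT hT
        rw [Finset.card_insert_of_notMem hfT]
        have hx1' : (0:ℝ) ≤ 1 - x ∨ True := Or.inr trivial
        calc (1 - x) ^ (T.card + 1) * (LLLN W S2 : ℝ)
            = (1 - x) * ((1 - x) ^ T.card * (LLLN W S2 : ℝ)) := by ring
          _ ≤ (1 - x) * (LLLN W (S2 ∪ T) : ℝ) := by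
              apply mul_le_mul_of_nonneg_left h1
              have hx1 : x ≤ 1 := by
                rw [hxdef, div_le_one hp]
                calc Real.exp 1 ≤ 2 ^ 2 := by
                      nlinarith [Real.exp_one_lt_d9]
                  _ ≤ 2 ^ (k - 1) := by
                      apply pow_le_pow_right₀ (by norm_num)
                      omega
              linarith
          _ ≤ (LLLN W (S2 ∪ insert f T) : ℝ) := hstep
    have hunion : S2 ∪ S1 = S := by
      rw [hS1def, hS2def, Finset.union_comm]
      exact Finset.filter_union_filter_not_eq _ S
    have claimA' : (1 - x) ^ d * (LLLN W S2 : ℝ) ≤ (LLLN W S : ℝ) := by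
      have := claimA S1 subset_rfl
      rwa [hunion] at this
    -- partition and independence
    set M := (W.powerset.filter (fun c => (∀ f ∈ S, ¬LLLMono f c) ∧ LLLMono e c)).card with hMdef
    set M2 := (W.powerset.filter (fun c => (∀ f ∈ S2, ¬LLLMono f c) ∧ LLLMono e c)).card with hM2def
    have hpart : LLLN W S = LLLN W (insert e S) + M := LLL_partition W e S
    have hMM2 : M ≤ M2 := by
      apply Finset.card_le_card
      intro c hc
      rw [Finset.mem_filter] at hc ⊢
      refine ⟨hc.1, fun f hf => hc.2.1 f (Finset.filter_subset _ _ hf), hc.2.2⟩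
    have hindep : M2 * 2 ^ (k - 1) = LLLN W S2 :=
      LLL_indep k (by omega) W e heW (huniform e heH) S2 hS2H
    have hexp : 1 ≤ Real.exp 1 * (1 - x) ^ d := by
      apply LLL_exp_bound d x hx0.le
      have h1 : x * ((d:ℝ) + 1) ≤ x * (2 ^ (k - 1) / Real.exp 1) :=
        mul_le_mul_of_nonneg_left hd hx0.le
      have h2 : x * (2 ^ (k - 1) / Real.exp 1) = 1 := by
        rw [hxdef]
        field_simp
      linarith
    -- final arithmetic
    have hNS2cast : (LLLN W S2 : ℝ) = (M2 : ℝ) * 2 ^ (k - 1) := by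
      exact_mod_cast hindep.symm
    have hM2nn : (0:ℝ) ≤ (M2:ℝ) := Nat.cast_nonneg _
    have hchain : (M : ℝ) ≤ x * (LLLN W S : ℝ) := by
      have c1 : (M:ℝ) ≤ (M2:ℝ) := by exact_mod_cast hMM2
      have c2 : (M2:ℝ) ≤ Real.exp 1 * (1 - x) ^ d * (M2:ℝ) := by
        nlinarith
      have c3 : Real.exp 1 * (1 - x) ^ d * (M2:ℝ) = x * ((1 - x) ^ d * (LLLN W S2 : ℝ)) := by
        rw [hNS2cast, hxdef]
        field_simp
      have c4 : x * ((1 - x) ^ d * (LLLN W S2 : ℝ)) ≤ x * (LLLN W S : ℝ) :=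
        mul_le_mul_of_nonneg_left claimA' hx0.le
      linarith
    have hpartR : (LLLN W S : ℝ) = (LLLN W (insert e S) : ℝ) + (M : ℝ) := by
      exact_mod_cast hpart
    linarith

/-- **Hypergraph 2-coloring via the Lovász Local Lemma.**
`H` is the (finite) edge set of a `k`-uniform hypergraph on vertices `V`:
every edge is a set of exactly `k` vertices.  If every edge intersects at most
`2^{k-1} / e - 1` other edges, then there is a 2-coloring of the vertices such
that no edge is monochromatic. -/
theorem hypergraph_two_coloring_LLL {V : Type*} [DecidableEq V] (k : ℕ) (hk : 1 ≤ k)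
    (H : Finset (Finset V))
    (huniform : ∀ e ∈ H, e.card = k)
    (hdeg : ∀ e ∈ H,
      ((H.filter (fun e' => e' ≠ e ∧ (e ∩ e').Nonempty)).card : ℝ)
        ≤ 2 ^ (k - 1) / Real.exp 1 - 1) :
    ∃ c : V → Bool, ∀ e ∈ H, ¬ ∃ b : Bool, ∀ v ∈ e, c v = b := by
  by_cases hk3 : 3 ≤ k
  case neg =>
    -- k ≤ 2 : the degree condition forces H = ∅
    have hHempty : ∀ e, e ∉ H := by
      intro e heH
      have h1 := hdeg e heH
      have h2 : (0:ℝ) ≤ ((H.filter (fun e' => e' ≠ e ∧ (e ∩ e').Nonempty)).card : ℝ) :=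
        Nat.cast_nonneg _
      have h3 : (2:ℝ) ^ (k - 1) ≤ 2 := by
        have : k - 1 ≤ 1 := by omega
        calc (2:ℝ) ^ (k - 1) ≤ 2 ^ 1 := by
              apply pow_le_pow_right₀ (by norm_num) this
          _ = 2 := by norm_num
      have h4 : (2:ℝ) ^ (k - 1) / Real.exp 1 < 1 := by
        rw [div_lt_one (Real.exp_pos 1)]
        nlinarith [Real.exp_one_gt_d9]
      linarith
    exact ⟨fun _ => true, fun e he => absurd he (hHempty e)⟩
  case pos =>
    set W := H.sup id with hWdef
    set x : ℝ := Real.exp 1 / 2 ^ (k - 1) with hxdef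
    have hp : (0:ℝ) < 2 ^ (k - 1) := by positivity
    have hx1 : x < 1 := by
      rw [hxdef, div_lt_one hp]
      calc Real.exp 1 < 2 ^ 2 := by nlinarith [Real.exp_one_lt_d9]
        _ ≤ 2 ^ (k - 1) := by
            apply pow_le_pow_right₀ (by norm_num)
            omega
    have hpos : ∀ T ⊆ H, 0 < LLLN W T := by
      intro T
      induction T using Finset.induction_on with
      | empty =>
        intro _
        rw [LLLN_empty]
        positivity
      | @insert e T heT ihT =>
        intro hsub
        have hTH : T ⊆ H := fun g hg => hsub (Finset.mem_insert_of_mem hg)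
        have heH : e ∈ H := hsub (Finset.mem_insert_self e T)
        have h1 := LLL_step k hk3 H huniform hdeg T.card T hTH rfl e heH
        have h2 : (0:ℝ) < (LLLN W T : ℝ) := by exact_mod_cast ihT hTH
        have h3 : (0:ℝ) < (LLLN W (insert e T) : ℝ) := by
          calc (0:ℝ) < (1 - x) * (LLLN W T : ℝ) := by nlinarith
            _ ≤ _ := h1
        exact_mod_cast h3
    have hHpos : 0 < LLLN W H := hpos H subset_rfl
    rw [LLLN, Finset.card_pos] at hHpos
    obtain ⟨c, hc⟩ := hHpos
    rw [Finset.mem_filter] at hc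
    refine ⟨fun v => decide (v ∈ c), fun e heH ⟨b, hb⟩ => ?_⟩
    have hmono : LLLMono e c := by
      cases b with
      | true =>
        left
        apply Finset.inter_eq_right.mpr
        intro v hv
        have := hb v hv
        simpa using this
      | false =>
        right
        rw [Finset.eq_empty_iff_forall_notMem]
        intro v hv
        rw [Finset.mem_inter] at hv
        have := hb v hv.2
        simp [hv.1] at this
    exact hc.2 e heH hmono
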